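/- Let P be a finite poset and F, G ∈ I(P,R). If S ⊆ P is a lower order ideal (a ∈ S and b ≤ a implies b ∈ S), then the submatrix of the matrix (Σ_{c ∈ P} F(c,a)·G(c,b))_{a,b ∈ P} obtained by restricting rows and columns to S equals the matrix (Σ_{c ∈ S} F(c,a)·G(c,b))_{a,b ∈ S}; in particular its determinant is Π_{a ∈ S} F(a,a)·G(a,a). -/
import Mathlib

lemma det_of_injective_triangular {m α R : Type*} [DecidableEq m] [Fintype m] [LinearOrder α]
    [CommRing R] (M : Matrix m m R) (b : m → α) (hb : Function.Injective b)
    (h : M.BlockTriangular b) : M.det = ∏ i, M i i := by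
  classical
  rw [h.det, Finset.prod_image (fun x _ y _ hxy => hb hxy)]
  refine Finset.prod_congr rfl fun i _ => ?_
  haveI : Unique {j // b j = b i} := ⟨⟨⟨i, rfl⟩⟩, fun j => Subtype.ext (hb j.2)⟩
  rw [Matrix.det_unique]
  have hd : ((default : {j // b j = b i}) : m) = i := hb (default : {j // b j = b i}).2
  rw [Matrix.toSquareBlock_def, Matrix.of_apply, hd]

/-- If `S` is a lower order ideal of a finite poset `P`, then the restriction to `S` of the
matrix `(∑ c ∈ P, F c a * G c b)` coincides with the matrix `(∑ c ∈ S, F c a * G c b)`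
indexed by `S`, and its determinant is `∏ a ∈ S, F a a * G a a`. -/
theorem incidence_matrix_lower_ideal {P : Type*} [Fintype P] [PartialOrder P] [DecidableEq P]
    {R : Type*} [CommRing R] (F G : P → P → R)
    (hF : ∀ a b, ¬ a ≤ b → F a b = 0) (hG : ∀ a b, ¬ a ≤ b → G a b = 0)
    (S : Finset P) (hS : ∀ a ∈ S, ∀ b, b ≤ a → b ∈ S) :
    (∀ a b : S, ∑ c : P, F c a * G c b = ∑ c ∈ S, F c a * G c b) ∧
      Matrix.det (Matrix.of fun a b : S => ∑ c : P, F c a * G c b) =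
        ∏ a ∈ S, F a a * G a a := by
  have h1 : ∀ a b : S, ∑ c : P, F c a * G c b = ∑ c ∈ S, F c a * G c b := by
    intro a b
    rw [← Finset.sum_subset (Finset.subset_univ S)]
    intro c _ hc
    have : ¬ (c : P) ≤ a := fun h => hc (hS a a.2 c h)
    rw [hF _ _ this, zero_mul]
  refine ⟨h1, ?_⟩
  set b : S → LinearExtension P := fun s => toLinearExtension (s : P) with hb
  have hbinj : Function.Injective b := fun x y h =>
    Subtype.ext (congrArg (fun z : LinearExtension P => (z : P)) h)
  set A : Matrix S S R := Matrix.of fun c a : S => F c a with hA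
  set B : Matrix S S R := Matrix.of fun c a : S => G c a with hB
  have hM : (Matrix.of fun a b : S => ∑ c : P, F c a * G c b) = A.transpose * B := by
    ext a b
    rw [Matrix.of_apply, h1 a b, Matrix.mul_apply, ← Finset.sum_coe_sort S]
    rfl
  have hle : ∀ i j : S, b j < b i → ¬ (i : P) ≤ (j : P) := by
    intro i j hij h
    exact absurd (toLinearExtension.monotone h) (not_le_of_gt hij)
  have hAt : A.BlockTriangular b := fun i j hij => hF _ _ (hle i j hij)
  have hBt : B.BlockTriangular b := fun i j hij => hG _ _ (hle i j hij)
  rw [hM, Matrix.det_mul, Matrix.det_transpose,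
    det_of_injective_triangular A b hbinj hAt,
    det_of_injective_triangular B b hbinj hBt,
    ← Finset.prod_mul_distrib, ← Finset.prod_coe_sort S]
  rfl
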